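/- A connected graph G of order n with minimum degree δ satisfying 16 ≤ δ ≤ √(n−1) − 2 has rvc(G) ≤ 4n/(δ+1) + 5. -/

import Mathlib

open SimpleGraph

/-- A coloring `c` is a rainbow vertex-coloring witness with `k` colors: any two vertices are
joined by a path whose internal vertices have distinct colors, all among the first `k` colors. -/
def IsRainbowVColoring {V : Type*} (G : SimpleGraph V) (c : V → ℕ) (k : ℕ) : Prop :=
  ∀ u v : V, ∃ p : G.Walk u v, p.IsPath ∧ (p.support.tail.dropLast.map c).Nodup ∧
    ∀ w ∈ p.support.tail.dropLast, c w < k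

/-- The rainbow vertex-connection number. -/
noncomputable def rvc {V : Type*} (G : SimpleGraph V) : ℕ :=
  sInf {k : ℕ | ∃ c : V → ℕ, IsRainbowVColoring G c k}

set_option linter.unusedSectionVars false
set_option linter.unusedVariables false
set_option maxHeartbeats 1000000

namespace RVC

variable {V : Type*} [Fintype V] [DecidableEq V] (G : SimpleGraph V) [DecidableRel G.Adj]

/-- `near u v` : distance at most 2. -/
def near (u v : V) : Prop := u = v ∨ G.Adj u v ∨ ∃ w, G.Adj u w ∧ G.Adj w v

lemma near_refl (u : V) : near G u u := Or.inl rfl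

lemma near_symm {u v : V} (h : near G u v) : near G v u := by
  rcases h with h | h | ⟨w, h1, h2⟩
  · exact Or.inl h.symm
  · exact Or.inr (Or.inl h.symm)
  · exact Or.inr (Or.inr ⟨w, h2.symm, h1.symm⟩)

/-- closed neighborhood -/
def CN (v : V) : Finset V := insert v (G.neighborFinset v)

lemma mem_CN {z v : V} : z ∈ CN G v ↔ z = v ∨ G.Adj v z := by
  simp [CN, SimpleGraph.mem_neighborFinset]

lemma card_CN (v : V) : G.minDegree + 1 ≤ (CN G v).card := by
  have h1 : (CN G v).card = (G.neighborFinset v).card + 1 := by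
    apply Finset.card_insert_of_notMem
    simp [SimpleGraph.mem_neighborFinset]
  have h2 : G.minDegree ≤ G.degree v := G.minDegree_le_degree v
  have h3 : G.degree v = (G.neighborFinset v).card := rfl
  omega

lemma CN_disj {u v : V} (h : ¬ near G u v) : Disjoint (CN G u) (CN G v) := by
  rw [Finset.disjoint_left]
  intro z hzu hzv
  rw [mem_CN] at hzu hzv
  apply h
  rcases hzu with rfl | hzu
  · rcases hzv with rfl | hzv
    · exact Or.inl rfl
    · exact Or.inr (Or.inl hzv.symm)
  · rcases hzv with rfl | hzv
    · exact Or.inr (Or.inl hzu)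
    · exact Or.inr (Or.inr ⟨z, hzu, hzv.symm⟩)

/-- a packing: pairwise distance ≥ 3 -/
def pack (S : Finset V) : Prop := ∀ a ∈ S, ∀ b ∈ S, a ≠ b → ¬ near G a b

lemma pack_card {S : Finset V} (h : pack G S) :
    S.card * (G.minDegree + 1) ≤ Fintype.card V := by
  have hd : ∀ a ∈ S, ∀ b ∈ S, a ≠ b → Disjoint (CN G a) (CN G b) := by
    intro a ha b hb hab
    exact CN_disj G (h a ha b hb hab)
  have hcard := Finset.card_biUnion hd
  have hle : (S.biUnion (CN G)).card ≤ Fintype.card V := Finset.card_le_univ _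
  rw [hcard] at hle
  calc S.card * (G.minDegree + 1) = ∑ _a ∈ S, (G.minDegree + 1) := by
        rw [Finset.sum_const, smul_eq_mul]
      _ ≤ ∑ a ∈ S, (CN G a).card := Finset.sum_le_sum fun a _ => card_CN G a
      _ ≤ Fintype.card V := hle

/-- D is connected to root r via walks inside D -/
def connTo (D : Finset V) (r : V) : Prop :=
  ∀ u ∈ D, ∃ w : G.Walk u r, ∀ x ∈ w.support, x ∈ D

/-- v is within distance 2 of D -/
def cov2 (D : Finset V) (v : V) : Prop := ∃ d ∈ D, near G v d

structure GoodT (D S : Finset V) (r : V) : Prop where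
  rD : r ∈ D
  SD : S ⊆ D
  hp : pack G S
  hc : connTo G D r
  hcard : D.card + 2 ≤ 3 * S.card

lemma ext_aux {D : Finset V} :
    ∀ {z r : V} (_w : G.Walk z r), r ∈ D → ¬ cov2 G D z →
    ∃ x a b d, ¬ cov2 G D x ∧ G.Adj x a ∧ G.Adj a b ∧ G.Adj b d ∧ d ∈ D := by
  intro z r w
  induction w with
  | nil => intro rD hz; exact absurd ⟨_, rD, near_refl G _⟩ hz
  | @cons z z' r hadj w ih =>
    intro rD hz
    by_cases hz' : cov2 G D z'
    · obtain ⟨d, hd, hnear⟩ := hz'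
      rcases hnear with heq | h | ⟨w', h1, h2⟩
      · exact absurd ⟨z', heq ▸ hd, Or.inr (Or.inl hadj)⟩ hz
      · exact absurd ⟨d, hd, Or.inr (Or.inr ⟨z', hadj, h⟩)⟩ hz
      · exact ⟨z, z', w', d, hz, hadj, h1, h2, hd⟩
    · exact ih rD hz'

lemma exists_tree (hG : G.Connected) :
    ∃ (D S : Finset V) (r : V), GoodT G D S r ∧ ∀ v, cov2 G D v := by
  classical
  have hne : Nonempty V := hG.nonempty
  obtain ⟨r⟩ := hne
  set F : Finset (Finset V × Finset V) :=
    Finset.univ.filter (fun p => GoodT G p.1 p.2 r) with hF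
  have hFne : F.Nonempty := by
    refine ⟨({r}, {r}), ?_⟩
    rw [hF, Finset.mem_filter]
    refine ⟨Finset.mem_univ _, ?_⟩
    refine ⟨Finset.mem_singleton_self r, le_refl _, ?_, ?_, by simp⟩
    · intro a ha b hb hab
      rw [Finset.mem_singleton] at ha hb
      exact absurd (ha.trans hb.symm) hab
    · intro u hu
      rw [Finset.mem_singleton] at hu
      subst hu
      exact ⟨Walk.nil, by simp⟩
  obtain ⟨p, hpF, hmax⟩ := F.exists_max_image (fun p => p.1.card) hFne
  obtain ⟨D, S⟩ := p
  rw [hF, Finset.mem_filter] at hpF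
  have hgood : GoodT G D S r := hpF.2
  refine ⟨D, S, r, hgood, ?_⟩
  by_contra hcov
  push_neg at hcov
  obtain ⟨v, hv⟩ := hcov
  obtain ⟨w⟩ := hG v r
  obtain ⟨x, a, b, d, hx, hxa, hab, hbd, hd⟩ := ext_aux G w hgood.rD hv
  have hxD : x ∉ D := fun hxD => hx ⟨x, hxD, near_refl G x⟩
  set D' : Finset V := insert x (insert a (insert b D)) with hD'
  set S' : Finset V := insert x S with hS'
  have hDD' : D ⊆ D' := by
    intro z hz; simp [hD', hz]
  have hgood' : GoodT G D' S' r := by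
    constructor
    · exact hDD' hgood.rD
    · intro s hs
      rw [hS', Finset.mem_insert] at hs
      rcases hs with rfl | hs
      · simp [hD']
      · exact hDD' (hgood.SD hs)
    · -- pack S'
      intro s hs t ht hst
      rw [hS', Finset.mem_insert] at hs ht
      have key : ∀ s ∈ S, ¬ near G x s := fun s hs hn => hx ⟨s, hgood.SD hs, hn⟩
      rcases hs with rfl | hs
      · rcases ht with rfl | ht
        · exact absurd rfl hst
        · exact key t ht
      · rcases ht with rfl | ht
        · exact fun hn => key s hs (near_symm G hn)
        · exact hgood.hp s hs t ht hst
    · -- connTo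
      intro u hu
      obtain ⟨wd, hwd⟩ := hgood.hc d hd
      have hmem : ∀ y ∈ wd.support, y ∈ D' := fun y hy => hDD' (hwd y hy)
      rw [hD'] at hu ⊢
      simp only [Finset.mem_insert] at hu
      rcases hu with rfl | rfl | rfl | hu
      · refine ⟨Walk.cons hxa (Walk.cons hab (Walk.cons hbd wd)), ?_⟩
        intro y hy
        simp only [Walk.support_cons, List.mem_cons] at hy
        rcases hy with rfl | rfl | rfl | hy
        · simp
        · simp
        · simp
        · exact hmem y hy
      · refine ⟨Walk.cons hab (Walk.cons hbd wd), ?_⟩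
        intro y hy
        simp only [Walk.support_cons, List.mem_cons] at hy
        rcases hy with rfl | rfl | hy
        · simp
        · simp
        · exact hmem y hy
      · refine ⟨Walk.cons hbd wd, ?_⟩
        intro y hy
        simp only [Walk.support_cons, List.mem_cons] at hy
        rcases hy with rfl | hy
        · simp
        · exact hmem y hy
      · obtain ⟨wu, hwu⟩ := hgood.hc u hu
        exact ⟨wu, fun y hy => hDD' (hwu y hy)⟩
    · -- card
      have h1 : D'.card ≤ D.card + 3 := by
        calc D'.card ≤ (insert a (insert b D)).card + 1 := Finset.card_insert_le _ _
          _ ≤ ((insert b D).card + 1) + 1 := by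
              have := Finset.card_insert_le a (insert b D); omega
          _ ≤ ((D.card + 1) + 1) + 1 := by
              have := Finset.card_insert_le b D; omega
      have hxS : x ∉ S := fun hxS => hxD (hgood.SD hxS)
      have h2 : S'.card = S.card + 1 := Finset.card_insert_of_notMem hxS
      have := hgood.hcard
      omega
  have hmem' : (D', S') ∈ F := by
    rw [hF, Finset.mem_filter]; exact ⟨Finset.mem_univ _, hgood'⟩
  have hlt : D.card < D'.card := by
    apply Finset.card_lt_card
    constructor
    · exact hDD'
    · intro hsub
      exact hxD (hsub (by simp [hD']))
  have := hmax (D', S') hmem'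
  simp only at this
  omega

section Stage2

variable (D : Finset V)

/-- distance-1 fringe -/
def L1 (v : V) : Prop := v ∉ D ∧ ∃ d ∈ D, G.Adj v d

/-- distance-2 fringe -/
def L2 (v : V) : Prop := v ∉ D ∧ ¬ ∃ d ∈ D, G.Adj v d

lemma L1_not_L2 {v : V} (h : L1 G D v) : ¬ L2 G D v := fun h2 => h2.2 h.2

lemma tri (v : V) : v ∈ D ∨ L1 G D v ∨ L2 G D v := by
  by_cases h : v ∈ D
  · exact Or.inl h
  by_cases h2 : ∃ d ∈ D, G.Adj v d
  · exact Or.inr (Or.inl ⟨h, h2⟩)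
  · exact Or.inr (Or.inr ⟨h, h2⟩)

lemma L2_gate (hcov : ∀ v, cov2 G D v) {v : V} (h : L2 G D v) :
    ∃ y, G.Adj v y ∧ L1 G D y := by
  obtain ⟨d, hd, hnear⟩ := hcov v
  rcases hnear with rfl | hadj | ⟨w, h1, h2⟩
  · exact absurd hd h.1
  · exact absurd ⟨d, hd, hadj⟩ h.2
  · have hwD : w ∉ D := fun hwD => h.2 ⟨w, hwD, h1⟩
    exact ⟨w, h1, hwD, d, hd, h2⟩

open Classical in
/-- the L1-neighborhood of a vertex -/
noncomputable def gateF (x : V) : Finset V :=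
  (G.neighborFinset x).filter (fun y => L1 G D y)

lemma mem_gateF {x y : V} : y ∈ gateF G D x ↔ G.Adj x y ∧ L1 G D y := by
  classical
  simp [gateF, SimpleGraph.mem_neighborFinset]

lemma exists_M (hcov : ∀ v, cov2 G D v) :
    ∃ M : Finset V, (∀ m ∈ M, L2 G D m) ∧ pack G M ∧
      (∀ z, L2 G D z → ∃ m ∈ M, near G z m) ∧
      (∀ v mi, mi ∈ M → v ∉ M → L2 G D v →
        (∀ m ∈ M, m ≠ mi → ¬ near G v m) →
        (gateF G D mi).card ≤ (gateF G D v).card) := by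
  classical
  set C : Finset (Finset V) :=
    Finset.univ.filter (fun M => (∀ m ∈ M, L2 G D m) ∧ pack G M) with hC
  have hCne : C.Nonempty := by
    refine ⟨∅, ?_⟩
    rw [hC, Finset.mem_filter]
    exact ⟨Finset.mem_univ _, by simp, by intro a ha; simp at ha⟩
  obtain ⟨M0, hM0C, hmax⟩ := C.exists_max_image (fun M => M.card) hCne
  set B : Finset (Finset V) := C.filter (fun M => M.card = M0.card) with hB
  have hBne : B.Nonempty := ⟨M0, by rw [hB, Finset.mem_filter]; exact ⟨hM0C, rfl⟩⟩
  obtain ⟨M, hMB, hmin⟩ := B.exists_min_image (fun M => ∑ m ∈ M, (gateF G D m).card) hBne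
  rw [hB, Finset.mem_filter] at hMB
  obtain ⟨hMC, hMcard⟩ := hMB
  rw [hC, Finset.mem_filter] at hMC
  obtain ⟨-, hML2, hMp⟩ := hMC
  refine ⟨M, hML2, hMp, ?_, ?_⟩
  · -- coverage
    intro z hz
    by_contra hno
    push_neg at hno
    have hzM : z ∉ M := fun hzM => hno z hzM (near_refl G z)
    have hmem : insert z M ∈ C := by
      rw [hC, Finset.mem_filter]
      refine ⟨Finset.mem_univ _, ?_, ?_⟩
      · intro m hm
        rcases Finset.mem_insert.mp hm with rfl | hm
        · exact hz
        · exact hML2 m hm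
      · intro a ha b hb hab
        rcases Finset.mem_insert.mp ha with heqa | ha
        · rcases Finset.mem_insert.mp hb with heqb | hb
          · exact absurd (heqa.trans heqb.symm) hab
          · exact heqa ▸ hno b hb
        · rcases Finset.mem_insert.mp hb with heqb | hb
          · exact fun hn => hno a ha (near_symm G (heqb ▸ hn))
          · exact hMp a ha b hb hab
    have := hmax _ hmem
    have : (insert z M).card = M.card + 1 := Finset.card_insert_of_notMem hzM
    omega
  · -- swap minimality
    intro v mi hmi hvM hvL2 hfar
    have hvE : v ∉ M.erase mi := fun h => hvM (Finset.mem_of_mem_erase h)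
    have hM'C : insert v (M.erase mi) ∈ C := by
      rw [hC, Finset.mem_filter]
      refine ⟨Finset.mem_univ _, ?_, ?_⟩
      · intro m hm
        rcases Finset.mem_insert.mp hm with heq | hm
        · exact heq ▸ hvL2
        · exact hML2 m (Finset.mem_of_mem_erase hm)
      · intro a ha b hb hab
        rcases Finset.mem_insert.mp ha with heqa | ha
        · rcases Finset.mem_insert.mp hb with heqb | hb
          · exact absurd (heqa.trans heqb.symm) hab
          · exact heqa ▸ hfar b (Finset.mem_of_mem_erase hb) (Finset.ne_of_mem_erase hb)
        · rcases Finset.mem_insert.mp hb with heqb | hb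
          · exact fun hn => hfar a (Finset.mem_of_mem_erase ha) (Finset.ne_of_mem_erase ha) (near_symm G (heqb ▸ hn))
          · exact hMp a (Finset.mem_of_mem_erase ha) b (Finset.mem_of_mem_erase hb) hab
    have hM'card : (insert v (M.erase mi)).card = M.card := by
      rw [Finset.card_insert_of_notMem hvE, Finset.card_erase_of_mem hmi]
      have : 0 < M.card := Finset.card_pos.mpr ⟨mi, hmi⟩
      omega
    have hM'B : insert v (M.erase mi) ∈ B := by
      rw [hB, Finset.mem_filter]
      exact ⟨hM'C, by rw [hM'card, hMcard]⟩
    have hsum := hmin _ hM'B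
    have h1 : ∑ m ∈ M, (gateF G D m).card
        = ∑ m ∈ M.erase mi, (gateF G D m).card + (gateF G D mi).card := by
      rw [Finset.sum_erase_add _ _ hmi]
    have h2 : ∑ m ∈ insert v (M.erase mi), (gateF G D m).card
        = ∑ m ∈ M.erase mi, (gateF G D m).card + (gateF G D v).card := by
      rw [Finset.sum_insert hvE]; ring
    omega

end Stage2

section Stage3

variable (D M : Finset V)

noncomputable def idxD (v : V) : ℕ := if h : v ∈ D then (D.equivFin ⟨v, h⟩ : ℕ) else 0
noncomputable def idxM (m : V) : ℕ := if h : m ∈ M then (M.equivFin ⟨m, h⟩ : ℕ) else 0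

lemma idxD_lt {v : V} (h : v ∈ D) : idxD D v < D.card := by
  rw [idxD, dif_pos h]; exact (D.equivFin ⟨v, h⟩).isLt

lemma idxD_inj {u v : V} (hu : u ∈ D) (hv : v ∈ D) (h : idxD D u = idxD D v) : u = v := by
  rw [idxD, dif_pos hu, idxD, dif_pos hv] at h
  have := D.equivFin.injective (Fin.ext h)
  exact Subtype.mk_eq_mk.mp this

lemma idxM_lt {m : V} (h : m ∈ M) : idxM M m < M.card := by
  rw [idxM, dif_pos h]; exact (M.equivFin ⟨m, h⟩).isLt

lemma idxM_inj {u v : V} (hu : u ∈ M) (hv : v ∈ M) (h : idxM M u = idxM M v) : u = v := by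
  rw [idxM, dif_pos hu, idxM, dif_pos hv] at h
  have := M.equivFin.injective (Fin.ext h)
  exact Subtype.mk_eq_mk.mp this

open Classical in
noncomputable def sig (v : V) : ℕ :=
  if v ∈ D then idxD D v
  else if L1 G D v then
    (if h2 : ∃ m ∈ M, G.Adj v m then D.card + idxM M h2.choose else D.card + M.card)
  else if v ∈ M then D.card + M.card + 2
  else D.card + M.card + 1

variable {D M}
variable (hML2 : ∀ m ∈ M, L2 G D m) (hMp : pack G M)

lemma sig_D {v : V} (h : v ∈ D) : sig G D M v = idxD D v := by
  rw [sig, if_pos h]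

lemma sig_D_lt {v : V} (h : v ∈ D) : sig G D M v < D.card := by
  rw [sig_D G h]; exact idxD_lt D h

lemma sig_inj_D {u v : V} (hu : u ∈ D) (hv : v ∈ D) (h : sig G D M u = sig G D M v) :
    u = v := by
  rw [sig_D G hu, sig_D G hv] at h
  exact idxD_inj D hu hv h

include hMp in
lemma sig_C {v m : V} (hv : L1 G D v) (hm : m ∈ M) (hadj : G.Adj v m) :
    sig G D M v = D.card + idxM M m := by
  classical
  have h2 : ∃ m' ∈ M, G.Adj v m' := ⟨m, hm, hadj⟩
  rw [sig, if_neg (by exact fun h => hv.1 h), if_pos hv, dif_pos h2]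
  obtain ⟨hm', hadj'⟩ := h2.choose_spec
  congr 1
  by_cases heq : h2.choose = m
  · rw [heq]
  · exact absurd (Or.inr (Or.inr ⟨v, hadj'.symm, hadj⟩)) (hMp _ hm' m hm heq)

lemma sig_A {v : V} (hv : L1 G D v) (h : ∀ m ∈ M, ¬ G.Adj v m) :
    sig G D M v = D.card + M.card := by
  classical
  have h2 : ¬ ∃ m' ∈ M, G.Adj v m' := by
    rintro ⟨m, hm, hadj⟩; exact h m hm hadj
  rw [sig, if_neg (by exact fun hh => hv.1 hh), if_pos hv, dif_neg h2]

include hML2 in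
lemma sig_E {v : V} (hv : v ∈ M) : sig G D M v = D.card + M.card + 2 := by
  have hL2 := hML2 v hv
  rw [sig, if_neg hL2.1, if_neg (L1_not_L2 G D · hL2), if_pos hv]

lemma sig_B {v : V} (hv : L2 G D v) (hvM : v ∉ M) :
    sig G D M v = D.card + M.card + 1 := by
  rw [sig, if_neg hv.1, if_neg (L1_not_L2 G D · hv), if_neg hvM]

lemma sig_lt_K (v : V) : sig G D M v < D.card + M.card + 3 := by
  classical
  rw [sig]
  split_ifs with h1 h2 h3 h4
  · have := idxD_lt D h1; omega
  · have := idxM_lt M h3.choose_spec.1; omega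
  · omega
  · omega
  · omega

lemma sig_notD_ge {v : V} (h : v ∉ D) : D.card ≤ sig G D M v := by
  classical
  rw [sig, if_neg h]
  split_ifs with h2 h3 h4
  · have := idxM_lt M h3.choose_spec.1; omega
  · omega
  · omega
  · omega

include hMp in
lemma sig_C_rev {y m : V} (hy : L1 G D y) (hm : m ∈ M)
    (h : sig G D M y = D.card + idxM M m) : G.Adj y m := by
  classical
  by_cases h2 : ∃ m' ∈ M, G.Adj y m'
  · obtain ⟨m', hm', hadj'⟩ := h2
    have := sig_C G hMp hy hm' hadj'
    rw [this] at h
    have : idxM M m' = idxM M m := by omega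
    rwa [idxM_inj M hm' hm this] at hadj'
  · have := sig_A G hy (by rintro m' hm' hadj'; exact h2 ⟨m', hm', hadj'⟩)
    rw [this] at h
    have := idxM_lt M hm
    omega

end Stage3

section Stage4

lemma dropLast_reverse' {α : Type*} (m : List α) : m.reverse.dropLast = m.tail.reverse := by
  have h := List.tail_reverse (l := m.reverse)
  rw [List.reverse_reverse] at h
  rw [h, List.reverse_reverse]

lemma dropLast_tail_comm {α : Type*} (m : List α) : m.dropLast.tail = m.tail.dropLast := by
  cases m with
  | nil => rfl
  | cons a t =>
    cases t with
    | nil => rfl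
    | cons b t2 => simp

lemma rev_tail_dropLast {α : Type*} (l : List α) :
    l.reverse.tail.dropLast = l.tail.dropLast.reverse := by
  rw [List.tail_reverse, dropLast_reverse', dropLast_tail_comm]

variable {D M : Finset V} {r : V}

/-- the winning condition for a pair -/
def Win (u v : V) : Prop :=
  ∃ p : G.Walk u v, p.IsPath ∧
    ((p.support.tail.dropLast).map (sig G D M)).Nodup ∧
    ∀ w ∈ p.support.tail.dropLast, sig G D M w < D.card + M.card + 3

lemma win_flip {u v : V} (h : Win G (D := D) (M := M) v u) : Win G (D := D) (M := M) u v := by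
  obtain ⟨p, h1, h2, h3⟩ := h
  refine ⟨p.reverse, h1.reverse, ?_, ?_⟩
  · rw [Walk.support_reverse, rev_tail_dropLast, List.map_reverse]
    exact List.nodup_reverse.mpr h2
  · intro w hw
    rw [Walk.support_reverse, rev_tail_dropLast, List.mem_reverse] at hw
    exact h3 w hw

lemma exists_mid (hconn : connTo G D r) {a b : V} (ha : a ∈ D) (hb : b ∈ D) :
    ∃ Q : G.Walk a b, Q.IsPath ∧ ∀ x ∈ Q.support, x ∈ D := by
  obtain ⟨wa, hwa⟩ := hconn a ha
  obtain ⟨wb, hwb⟩ := hconn b hb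
  refine ⟨(wa.append wb.reverse).bypass, Walk.bypass_isPath _, ?_⟩
  intro x hx
  have hx' := Walk.support_bypass_subset _ hx
  rw [Walk.support_append] at hx'
  rcases List.mem_append.mp hx' with h | h
  · exact hwa x h
  · have : x ∈ wb.reverse.support := List.mem_of_mem_tail h
    rw [Walk.support_reverse, List.mem_reverse] at this
    exact hwb x this

lemma buildD (hconn : connTo G D r) {u v : V} (hu : u ∈ D) (hv : v ∈ D) :
    Win G (D := D) (M := M) u v := by
  obtain ⟨Q, hQp, hQD⟩ := exists_mid G hconn hu hv
  refine ⟨Q, hQp, ?_, fun w _ => sig_lt_K G w⟩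
  have hsub : Q.support.tail.dropLast.Sublist Q.support :=
    (List.dropLast_sublist _).trans (List.tail_sublist _)
  apply List.Nodup.map_on
  · intro x hx y hy hxy
    exact sig_inj_D G (hQD x (hsub.mem hx)) (hQD y (hsub.mem hy)) hxy
  · exact hQp.support_nodup.sublist hsub

lemma buildLR (hconn : connTo G D r) {u v a b : V} (ha : a ∈ D) (hb : b ∈ D)
    (huD : u ∉ D) (hvD : v ∉ D) (huv : u ≠ v)
    (Lfr Rfr : List V) (eL : G.Walk u a) (hLs : eL.support = u :: (Lfr ++ [a]))
    (eR : G.Walk b v) (hRs : eR.support = b :: (Rfr ++ [v]))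
    (hfrD : ∀ z ∈ Lfr ++ Rfr, z ∉ D)
    (hfruv : ∀ z ∈ Lfr ++ Rfr, z ≠ u ∧ z ≠ v)
    (hcol : ((Lfr ++ Rfr).map (sig G D M)).Nodup) :
    Win G (D := D) (M := M) u v := by
  obtain ⟨Q, hQp, hQD⟩ := exists_mid G hconn ha hb
  have hQs : Q.support = a :: Q.support.tail := Q.support_eq_cons
  have hsup : (eL.append (Q.append eR)).support
      = u :: (Lfr ++ (Q.support ++ (Rfr ++ [v]))) := by
    rw [Walk.support_append, Walk.support_append, hLs, hRs]
    rw [hQs]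
    simp
    rw [← List.cons_append, ← hQs]
  have hint : (eL.append (Q.append eR)).support.tail.dropLast
      = Lfr ++ Q.support ++ Rfr := by
    rw [hsup, List.tail_cons,
      show Lfr ++ (Q.support ++ (Rfr ++ [v])) = (Lfr ++ Q.support ++ Rfr) ++ [v] by simp,
      List.dropLast_concat]
  have hfr_nd : (Lfr ++ Rfr).Nodup := hcol.of_map
  obtain ⟨hLnd, hRnd, hLRdis⟩ := List.nodup_append.mp hfr_nd
  have hQnd : Q.support.Nodup := hQp.support_nodup
  have hLD : ∀ z ∈ Lfr, z ∉ D := fun z hz => hfrD z (List.mem_append.mpr (Or.inl hz))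
  have hRD : ∀ z ∈ Rfr, z ∉ D := fun z hz => hfrD z (List.mem_append.mpr (Or.inr hz))
  have hcol' := hcol
  rw [List.map_append, List.nodup_append] at hcol'
  obtain ⟨hmL, hmR, hmdis⟩ := hcol'
  refine ⟨eL.append (Q.append eR), ?_, ?_, fun w _ => sig_lt_K G w⟩
  · -- IsPath
    rw [Walk.isPath_def, hsup, List.nodup_cons]
    constructor
    · intro hu'
      rcases List.mem_append.mp hu' with h | h
      · exact (hfruv u (List.mem_append.mpr (Or.inl h))).1 rfl
      · rcases List.mem_append.mp h with h | h
        · exact huD (hQD u h)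
        · rcases List.mem_append.mp h with h | h
          · exact (hfruv u (List.mem_append.mpr (Or.inr h))).1 rfl
          · rw [List.mem_singleton] at h; exact huv h
    · refine List.nodup_append.mpr ⟨hLnd, ?_, ?_⟩
      · refine List.nodup_append.mpr ⟨hQnd, ?_, ?_⟩
        · refine List.nodup_append.mpr ⟨hRnd, List.nodup_singleton v, ?_⟩
          intro z hz z' hz2 hzz
          rw [← hzz] at hz2
          rw [List.mem_singleton] at hz2
          subst hz2
          exact (hfruv z (List.mem_append.mpr (Or.inr hz))).2 rfl
        · intro z hz z' hz2 hzz
          rw [← hzz] at hz2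
          rcases List.mem_append.mp hz2 with h | h
          · exact hRD z h (hQD z hz)
          · rw [List.mem_singleton] at h
            subst h
            exact hvD (hQD z hz)
      · intro z hz z' hz2 hzz
        rw [← hzz] at hz2
        rcases List.mem_append.mp hz2 with h | h
        · exact hLD z hz (hQD z h)
        · rcases List.mem_append.mp h with h | h
          · exact hLRdis z hz z h rfl
          · rw [List.mem_singleton] at h
            subst h
            exact (hfruv z (List.mem_append.mpr (Or.inl hz))).2 rfl
  · -- colors
    rw [hint, List.map_append, List.map_append]
    have hmQ : (Q.support.map (sig G D M)).Nodup := by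
      apply List.Nodup.map_on
      · intro x hx y hy hxy
        exact sig_inj_D G (hQD x hx) (hQD y hy) hxy
      · exact hQnd
    rw [List.nodup_append]
    refine ⟨?_, hmR, ?_⟩
    · rw [List.nodup_append]
      refine ⟨hmL, hmQ, ?_⟩
      intro c hc c' hc2 hcc
      rw [← hcc] at hc2
      obtain ⟨z, hz, rfl⟩ := List.mem_map.mp hc
      obtain ⟨x, hx, hxz⟩ := List.mem_map.mp hc2
      have h1 := sig_notD_ge G (D := D) (M := M) (hLD z hz)
      have h2 := sig_D_lt G (D := D) (M := M) (hQD x hx)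
      omega
    · intro c hc c' hc2 hcc
      rw [← hcc] at hc2
      rcases List.mem_append.mp hc with h | h
      · exact hmdis c h c hc2 rfl
      · obtain ⟨x, hx, rfl⟩ := List.mem_map.mp h
        obtain ⟨z, hz, hxz⟩ := List.mem_map.mp hc2
        have h1 := sig_notD_ge G (D := D) (M := M) (hRD z hz)
        have h2 := sig_D_lt G (D := D) (M := M) (hQD x hx)
        omega

end Stage4

section Stage5

variable {D M : Finset V} {r : V}

lemma buildR (hconn : connTo G D r) {u v b : V} (hu : u ∈ D) (hb : b ∈ D)
    (hvD : v ∉ D)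
    (Rfr : List V) (eR : G.Walk b v) (hRs : eR.support = b :: (Rfr ++ [v]))
    (hfrD : ∀ z ∈ Rfr, z ∉ D)
    (hfrv : ∀ z ∈ Rfr, z ≠ v)
    (hcol : (Rfr.map (sig G D M)).Nodup) :
    Win G (D := D) (M := M) u v := by
  obtain ⟨Q, hQp, hQD⟩ := exists_mid G hconn hu hb
  have hQs : Q.support = u :: Q.support.tail := Q.support_eq_cons
  have hQtD : ∀ z ∈ Q.support.tail, z ∈ D := fun z hz => hQD z (List.mem_of_mem_tail hz)
  have hsup : (Q.append eR).support = u :: (Q.support.tail ++ (Rfr ++ [v])) := by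
    rw [Walk.support_append, hRs]
    simp only [List.tail_cons]
    rw [hQs]
    simp
    rw [← List.cons_append, ← hQs]
  have hint : (Q.append eR).support.tail.dropLast = Q.support.tail ++ Rfr := by
    rw [hsup, List.tail_cons,
      show Q.support.tail ++ (Rfr ++ [v]) = (Q.support.tail ++ Rfr) ++ [v] by simp,
      List.dropLast_concat]
  have hQnd : Q.support.Nodup := hQp.support_nodup
  have hQtnd : Q.support.tail.Nodup := hQnd.sublist (List.tail_sublist _)
  have hRnd : Rfr.Nodup := hcol.of_map
  refine ⟨Q.append eR, ?_, ?_, fun w _ => sig_lt_K G w⟩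
  · rw [Walk.isPath_def, hsup, List.nodup_cons]
    constructor
    · intro hu'
      rcases List.mem_append.mp hu' with h | h
      · have hnd2 : (u :: Q.support.tail).Nodup := hQs ▸ hQnd
        rw [List.nodup_cons] at hnd2
        exact hnd2.1 h
      · rcases List.mem_append.mp h with h | h
        · exact hfrD u h hu
        · rw [List.mem_singleton] at h
          exact hvD (h ▸ hu)
    · refine List.nodup_append.mpr ⟨hQtnd, ?_, ?_⟩
      · refine List.nodup_append.mpr ⟨hRnd, List.nodup_singleton v, ?_⟩
        intro z hz z' hz2 hzz
        rw [← hzz] at hz2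
        rw [List.mem_singleton] at hz2
        exact hfrv z hz hz2
      · intro z hz z' hz2 hzz
        rw [← hzz] at hz2
        rcases List.mem_append.mp hz2 with h | h
        · exact hfrD z h (hQtD z hz)
        · rw [List.mem_singleton] at h
          subst h
          exact hvD (hQtD z hz)
  · rw [hint, List.map_append, List.nodup_append]
    refine ⟨?_, hcol, ?_⟩
    · apply List.Nodup.map_on
      · intro x hx y hy hxy
        exact sig_inj_D G (hQtD x hx) (hQtD y hy) hxy
      · exact hQtnd
    · intro c hc c' hc2 hcc
      rw [← hcc] at hc2
      obtain ⟨x, hx, rfl⟩ := List.mem_map.mp hc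
      obtain ⟨z, hz, hxz⟩ := List.mem_map.mp hc2
      have h1 := sig_notD_ge G (D := D) (M := M) (hfrD z hz)
      have h2 := sig_D_lt G (D := D) (M := M) (hQtD x hx)
      omega

lemma path_edge {u v : V} (h : G.Adj u v) : Win G (D := D) (M := M) u v := by
  refine ⟨Walk.cons h Walk.nil, ?_, ?_, ?_⟩
  · rw [Walk.isPath_def]
    simp [h.ne]
  · simp
  · simp

lemma path2 {u w v : V} (h1 : G.Adj u w) (h2 : G.Adj w v) (huv : u ≠ v) :
    Win G (D := D) (M := M) u v := by
  refine ⟨Walk.cons h1 (Walk.cons h2 Walk.nil), ?_, ?_, ?_⟩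
  · rw [Walk.isPath_def]
    simp [h1.ne, h2.ne, huv]
  · simp
  · intro x hx
    simp only [Walk.support_cons, Walk.support_nil, List.tail_cons] at hx
    simp only [List.dropLast, List.mem_singleton] at hx
    subst hx
    exact sig_lt_K G x
  
lemma path3 {u y m v : V} (h1 : G.Adj u y) (h2 : G.Adj y m) (h3 : G.Adj m v)
    (hum : u ≠ m) (huv : u ≠ v) (hyv : y ≠ v)
    (hcol : sig G D M y ≠ sig G D M m) :
    Win G (D := D) (M := M) u v := by
  refine ⟨Walk.cons h1 (Walk.cons h2 (Walk.cons h3 Walk.nil)), ?_, ?_, ?_⟩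
  · rw [Walk.isPath_def]
    simp [h1.ne, h2.ne, h3.ne, hum, huv, hyv]
  · simp [hcol]
  · intro x hx
    simp only [Walk.support_cons, Walk.support_nil, List.tail_cons] at hx
    simp only [List.dropLast, List.mem_cons, List.mem_singleton] at hx
    rcases hx with rfl | rfl | h
    · exact sig_lt_K G x
    · exact sig_lt_K G x
    · simp at h

lemma path4 {u y m z v : V} (h1 : G.Adj u y) (h2 : G.Adj y m) (h3 : G.Adj m z)
    (h4 : G.Adj z v)
    (hum : u ≠ m) (huz : u ≠ z) (huv : u ≠ v) (hyz : y ≠ z) (hyv : y ≠ v) (hmv : m ≠ v)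
    (hc1 : sig G D M y ≠ sig G D M m) (hc2 : sig G D M y ≠ sig G D M z)
    (hc3 : sig G D M m ≠ sig G D M z) :
    Win G (D := D) (M := M) u v := by
  refine ⟨Walk.cons h1 (Walk.cons h2 (Walk.cons h3 (Walk.cons h4 Walk.nil))), ?_, ?_, ?_⟩
  · rw [Walk.isPath_def]
    simp [h1.ne, h2.ne, h3.ne, h4.ne, hum, huz, huv, hyz, hyv, hmv]
  · simp [hc1, hc2, hc3]
  · intro x hx
    simp only [Walk.support_cons, Walk.support_nil, List.tail_cons] at hx
    simp only [List.dropLast, List.mem_cons, List.mem_singleton] at hx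
    rcases hx with rfl | rfl | rfl | h
    · exact sig_lt_K G x
    · exact sig_lt_K G x
    · exact sig_lt_K G x
    · simp at h

end Stage5

section Stage6A

variable {D M : Finset V} {r : V}

lemma sig_L1_le {y : V} (hy : L1 G D y) : sig G D M y ≤ D.card + M.card := by
  classical
  rw [sig, if_neg hy.1, if_pos hy]
  split_ifs with h2
  · have := idxM_lt M h2.choose_spec.1; omega
  · omega

lemma L1_ne_L2' {y x : V} (hy : L1 G D y) (hx : L2 G D x) : y ≠ x :=
  fun h => L1_not_L2 G D (h ▸ hy) hx

/-- v-side escape constructions in the C-locked case -/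
lemma lockedEsc (hconn : connTo G D r) (hcov : ∀ w, cov2 G D w)
    (hML2 : ∀ m ∈ M, L2 G D m) (hMp : pack G M)
    {u v yu mi : V} (hmi : mi ∈ M) (hu : L2 G D u) (hv : L2 G D v) (huv : u ≠ v)
    (hnadj : ¬ G.Adj u v) (hncom : ¬ ∃ w, G.Adj u w ∧ G.Adj w v)
    (hyua : G.Adj u yu) (hyuL : L1 G D yu) (hyumi : G.Adj yu mi)
    (humi : u ≠ mi) (hvmi : v ≠ mi) (hvM : v ∉ M)
    (hesc : (G.Adj v mi) ∨ (∃ z, G.Adj v z ∧ G.Adj z mi ∧ L2 G D z) ∨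
      (∃ mj ∈ M, mj ≠ mi ∧ G.Adj v mj) ∨
      (∃ p mj, G.Adj v p ∧ L2 G D p ∧ mj ∈ M ∧ mj ≠ mi ∧ G.Adj p mj) ∨
      (∃ p y, G.Adj v p ∧ L2 G D p ∧ G.Adj p y ∧ L1 G D y ∧
        sig G D M y ≠ D.card + idxM M mi)) :
    Win G (D := D) (M := M) u v := by
  have hcyu : sig G D M yu = D.card + idxM M mi := sig_C G hMp hyuL hmi hyumi
  have hEmi : sig G D M mi = D.card + M.card + 2 := sig_E G hML2 hmi
  have hidx : idxM M mi < M.card := idxM_lt M hmi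
  have hyunv : yu ≠ v := L1_ne_L2' G hyuL hv
  have hyunu : yu ≠ u := L1_ne_L2' G hyuL hu
  obtain ⟨a, haD, hyua2⟩ := hyuL.2
  rcases hesc with hA | ⟨z, hvz, hzmi, hzL2⟩ | ⟨mj, hmj, hmjne, hvmj⟩ |
    ⟨p, mj, hvp, hpL2, hmj, hmjne, hpmj⟩ | ⟨p, y, hvp, hpL2, hpy, hyL, hyne⟩
  · -- (a) v adjacent to mi : local path u-yu-mi-v
    exact path3 G hyua hyumi hA.symm humi huv hyunv (by omega)
  · -- (b) local path u-yu-mi-z-v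
    have hzM : z ∉ M := fun hzM => hMp z hzM mi hmi hzmi.ne (Or.inr (Or.inl hzmi))
    have hBz : sig G D M z = D.card + M.card + 1 := sig_B G hzL2 hzM
    refine path4 G hyua hyumi hzmi.symm hvz.symm humi ?_ huv
      (L1_ne_L2' G hyuL hzL2) hyunv (Ne.symm hvmi) (by omega) (by omega) (by omega)
    · rintro rfl
      exact hnadj hvz.symm
  · -- (c2) through T via mj
    obtain ⟨yj, hmjyj, hyjL⟩ := L2_gate G D hcov (hML2 mj hmj)
    obtain ⟨b, hbD, hyjb⟩ := hyjL.2
    have hcyj : sig G D M yj = D.card + idxM M mj := sig_C G hMp hyjL hmj hmjyj.symm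
    have hEmj : sig G D M mj = D.card + M.card + 2 := sig_E G hML2 hmj
    have hij : idxM M mi ≠ idxM M mj := fun h => hmjne (idxM_inj M hmj hmi h.symm)
    have hjidx : idxM M mj < M.card := idxM_lt M hmj
    apply buildLR G hconn haD hbD hu.1 hv.1 huv [yu] [yj, mj]
      (Walk.cons hyua (Walk.cons hyua2 Walk.nil)) (by simp)
      (Walk.cons hyjb.symm (Walk.cons hmjyj.symm (Walk.cons hvmj.symm Walk.nil))) (by simp)
    · intro zz hzz
      simp only [List.mem_append, List.mem_cons, List.mem_singleton, List.not_mem_nil,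
        or_false] at hzz
      rcases hzz with heq | heq | heq <;> rw [heq]
      · exact hyuL.1
      · exact hyjL.1
      · exact (hML2 mj hmj).1
    · intro zz hzz
      simp only [List.mem_append, List.mem_cons, List.mem_singleton, List.not_mem_nil,
        or_false] at hzz
      rcases hzz with heq | heq | heq <;> rw [heq]
      · exact ⟨hyunu, hyunv⟩
      · exact ⟨L1_ne_L2' G hyjL hu, L1_ne_L2' G hyjL hv⟩
      · exact ⟨fun h => hnadj (h ▸ hvmj).symm, hvmj.ne'⟩
    · simp only [List.map_append, List.map_cons, List.map_nil]
      simp [hcyu, hcyj, hEmj]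
      omega
  · -- (c) through T via p and mj
    obtain ⟨yj, hmjyj, hyjL⟩ := L2_gate G D hcov (hML2 mj hmj)
    obtain ⟨b, hbD, hyjb⟩ := hyjL.2
    have hcyj : sig G D M yj = D.card + idxM M mj := sig_C G hMp hyjL hmj hmjyj.symm
    have hEmj : sig G D M mj = D.card + M.card + 2 := sig_E G hML2 hmj
    have hij : idxM M mi ≠ idxM M mj := fun h => hmjne (idxM_inj M hmj hmi h.symm)
    have hjidx : idxM M mj < M.card := idxM_lt M hmj
    have hpM : p ∉ M := fun h => hMp p h mj hmj hpmj.ne (Or.inr (Or.inl hpmj))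
    have hBp : sig G D M p = D.card + M.card + 1 := sig_B G hpL2 hpM
    apply buildLR G hconn haD hbD hu.1 hv.1 huv [yu] [yj, mj, p]
      (Walk.cons hyua (Walk.cons hyua2 Walk.nil)) (by simp)
      (Walk.cons hyjb.symm (Walk.cons hmjyj.symm
        (Walk.cons hpmj.symm (Walk.cons hvp.symm Walk.nil)))) (by simp)
    · intro zz hzz
      simp only [List.mem_append, List.mem_cons, List.mem_singleton, List.not_mem_nil,
        or_false] at hzz
      rcases hzz with heq | heq | heq | heq <;> rw [heq]
      · exact hyuL.1
      · exact hyjL.1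
      · exact (hML2 mj hmj).1
      · exact hpL2.1
    · intro zz hzz
      simp only [List.mem_append, List.mem_cons, List.mem_singleton, List.not_mem_nil,
        or_false] at hzz
      rcases hzz with heq | heq | heq | heq <;> rw [heq]
      · exact ⟨hyunu, hyunv⟩
      · exact ⟨L1_ne_L2' G hyjL hu, L1_ne_L2' G hyjL hv⟩
      · constructor
        · intro heq2
          rw [heq2] at hpmj
          exact hncom ⟨p, hpmj.symm, hvp.symm⟩
        · intro heq2
          rw [heq2] at hmj
          exact hvM hmj
      · constructor
        · intro heq2
          rw [heq2] at hvp
          exact hnadj hvp.symm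
        · exact hvp.ne'
    · simp only [List.map_append, List.map_cons, List.map_nil]
      simp [hcyu, hcyj, hEmj, hBp]
      omega
  · -- (d) through T via p and its gate y
    obtain ⟨b, hbD, hyb⟩ := hyL.2
    have hyle : sig G D M y ≤ D.card + M.card := sig_L1_le G hyL
    have hple : D.card + M.card + 1 ≤ sig G D M p := by
      by_cases hpM : p ∈ M
      · rw [sig_E G hML2 hpM]; omega
      · rw [sig_B G hpL2 hpM]
    apply buildLR G hconn haD hbD hu.1 hv.1 huv [yu] [y, p]
      (Walk.cons hyua (Walk.cons hyua2 Walk.nil)) (by simp)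
      (Walk.cons hyb.symm (Walk.cons hpy.symm (Walk.cons hvp.symm Walk.nil))) (by simp)
    · intro zz hzz
      simp only [List.mem_append, List.mem_cons, List.mem_singleton, List.not_mem_nil,
        or_false] at hzz
      rcases hzz with heq | heq | heq <;> rw [heq]
      · exact hyuL.1
      · exact hyL.1
      · exact hpL2.1
    · intro zz hzz
      simp only [List.mem_append, List.mem_cons, List.mem_singleton, List.not_mem_nil,
        or_false] at hzz
      rcases hzz with heq | heq | heq <;> rw [heq]
      · exact ⟨hyunu, hyunv⟩
      · exact ⟨L1_ne_L2' G hyL hu, L1_ne_L2' G hyL hv⟩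
      · constructor
        · intro heq2
          rw [heq2] at hvp
          exact hnadj hvp.symm
        · exact hvp.ne'
    · simp only [List.map_append, List.map_cons, List.map_nil]
      have : sig G D M y ≠ D.card + idxM M mi := hyne
      simp [hcyu]
      omega

/-- badness forces equal gate sets -/
lemma bad_gates (hcov : ∀ w, cov2 G D w) (hML2 : ∀ m ∈ M, L2 G D m) (hMp : pack G M)
    (hswap : ∀ x mi, mi ∈ M → x ∉ M → L2 G D x →
        (∀ m ∈ M, m ≠ mi → ¬ near G x m) →
        (gateF G D mi).card ≤ (gateF G D x).card)
    {x mi : V} (hmi : mi ∈ M) (hx : L2 G D x) (hxmi : x ≠ mi)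
    (hlock : ∀ y, G.Adj x y → L1 G D y → G.Adj y mi)
    (hnoM : ∀ m ∈ M, ¬ G.Adj x m)
    (hnb : ∀ z, G.Adj x z → L2 G D z → ∀ m ∈ M, ¬ G.Adj z m) :
    gateF G D x = gateF G D mi := by
  obtain ⟨yx, hyxa, hyxL⟩ := L2_gate G D hcov hx
  have hxM : x ∉ M := fun hxM' =>
    hMp x hxM' mi hmi hxmi (Or.inr (Or.inr ⟨yx, hyxa, hlock yx hyxa hyxL⟩))
  have hfar : ∀ m ∈ M, m ≠ mi → ¬ near G x m := by
    intro m hm hne hnear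
    rcases hnear with rfl | hadj | ⟨w, hxw, hwm⟩
    · exact hxM hm
    · exact hnoM m hm hadj
    · have hwD : w ∉ D := fun hwD => (hML2 m hm).2 ⟨w, hwD, hwm.symm⟩
      rcases tri G D w with h | h | h
      · exact hwD h
      · exact hMp mi hmi m hm (fun hh => hne hh.symm)
          (Or.inr (Or.inr ⟨w, (hlock w hxw h).symm, hwm⟩))
      · exact hnb w hxw h m hm hwm
  have hle := hswap x mi hmi hxM hx hfar
  have hsub : gateF G D x ⊆ gateF G D mi := by
    intro y hy
    rw [mem_gateF] at hy ⊢
    exact ⟨(hlock y hy.1 hy.2).symm, hy.2⟩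
  exact Finset.eq_of_subset_of_card_le hsub hle

end Stage6A

section Stage6B

variable {D M : Finset V} {r : V}

lemma winL2L2 (hconn : connTo G D r) (hcov : ∀ w, cov2 G D w)
    (hML2 : ∀ m ∈ M, L2 G D m) (hMp : pack G M)
    (hMcov : ∀ z, L2 G D z → ∃ m ∈ M, near G z m)
    (hswap : ∀ x mi, mi ∈ M → x ∉ M → L2 G D x →
        (∀ m ∈ M, m ≠ mi → ¬ near G x m) →
        (gateF G D mi).card ≤ (gateF G D x).card)
    {u v : V} (huv : u ≠ v) (hnadj : ¬ G.Adj u v)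
    (hncom : ¬ ∃ w, G.Adj u w ∧ G.Adj w v)
    (hu : L2 G D u) (hv : L2 G D v) :
    Win G (D := D) (M := M) u v := by
  obtain ⟨yu, hyua, hyuL⟩ := L2_gate G D hcov hu
  obtain ⟨yv, hyva, hyvL⟩ := L2_gate G D hcov hv
  by_cases hdiff : ∀ y1, G.Adj u y1 → L1 G D y1 → ∀ y2, G.Adj v y2 → L1 G D y2 →
      sig G D M y1 = sig G D M y2
  case neg =>
    push_neg at hdiff
    obtain ⟨y1, h1a, h1L, y2, h2a, h2L, hne⟩ := hdiff
    obtain ⟨a, haD, h1d⟩ := h1L.2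
    obtain ⟨b, hbD, h2d⟩ := h2L.2
    apply buildLR G hconn haD hbD hu.1 hv.1 huv [y1] [y2]
      (Walk.cons h1a (Walk.cons h1d Walk.nil)) (by simp)
      (Walk.cons h2d.symm (Walk.cons h2a.symm Walk.nil)) (by simp)
    · intro zz hzz
      simp only [List.mem_append, List.mem_singleton, List.not_mem_nil, or_false] at hzz
      rcases hzz with heq | heq <;> rw [heq]
      · exact h1L.1
      · exact h2L.1
    · intro zz hzz
      simp only [List.mem_append, List.mem_singleton, List.not_mem_nil, or_false] at hzz
      rcases hzz with heq | heq <;> rw [heq]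
      · exact ⟨L1_ne_L2' G h1L hu, L1_ne_L2' G h1L hv⟩
      · exact ⟨L1_ne_L2' G h2L hu, L1_ne_L2' G h2L hv⟩
    · simp [hne]
  case pos =>
    have hlockuv : sig G D M yu = sig G D M yv := hdiff yu hyua hyuL yv hyva hyvL
    by_cases hMadj : ∃ m ∈ M, G.Adj yu m
    case pos =>
      obtain ⟨mi, hmi, hyumi⟩ := hMadj
      have hsyu : sig G D M yu = D.card + idxM M mi := sig_C G hMp hyuL hmi hyumi
      have hlocku : ∀ y, G.Adj u y → L1 G D y → G.Adj y mi := by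
        intro y hy hyL
        exact sig_C_rev G hMp hyL hmi
          (by rw [hdiff y hy hyL yv hyva hyvL, ← hlockuv, hsyu])
      have hlockv : ∀ y, G.Adj v y → L1 G D y → G.Adj y mi := by
        intro y hy hyL
        exact sig_C_rev G hMp hyL hmi (by rw [← hdiff yu hyua hyuL y hy hyL, hsyu])
      have humi : u ≠ mi := by
        intro heq
        apply hncom
        refine ⟨yv, ?_, hyva.symm⟩
        rw [heq]
        exact (hlockv yv hyva hyvL).symm
      have hvmi : v ≠ mi := by
        intro heq
        apply hncom
        refine ⟨yu, hyua, ?_⟩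
        rw [heq]
        exact hlocku yu hyua hyuL
      have hvM : v ∉ M := by
        intro hvM'
        apply hvmi
        have h1 : sig G D M yv = D.card + idxM M v := sig_C G hMp hyvL hvM' hyva.symm
        have h2 : D.card + idxM M mi = D.card + idxM M v := by
          rw [← hsyu, hlockuv, h1]
        exact idxM_inj M hvM' hmi (by omega)
      have huM : u ∉ M := by
        intro huM'
        apply humi
        have h1 : sig G D M yu = D.card + idxM M u := sig_C G hMp hyuL huM' hyua.symm
        rw [h1] at hsyu
        exact idxM_inj M huM' hmi (by omega)
      by_cases e1 : ∃ mj ∈ M, G.Adj v mj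
      · obtain ⟨mj, hmj, hvmj⟩ := e1
        by_cases hmjeq : mj = mi
        · exact lockedEsc G hconn hcov hML2 hMp hmi hu hv huv hnadj hncom hyua hyuL
            hyumi humi hvmi hvM (Or.inl (hmjeq ▸ hvmj))
        · exact lockedEsc G hconn hcov hML2 hMp hmi hu hv huv hnadj hncom hyua hyuL
            hyumi humi hvmi hvM (Or.inr (Or.inr (Or.inl ⟨mj, hmj, hmjeq, hvmj⟩)))
      by_cases e2 : ∃ z m2, G.Adj v z ∧ L2 G D z ∧ m2 ∈ M ∧ G.Adj z m2
      · obtain ⟨z, m2, hvz, hzL2, hm2, hzm2⟩ := e2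
        by_cases hmeq : m2 = mi
        · exact lockedEsc G hconn hcov hML2 hMp hmi hu hv huv hnadj hncom hyua hyuL
            hyumi humi hvmi hvM (Or.inr (Or.inl ⟨z, hvz, hmeq ▸ hzm2, hzL2⟩))
        · exact lockedEsc G hconn hcov hML2 hMp hmi hu hv huv hnadj hncom hyua hyuL
            hyumi humi hvmi hvM
            (Or.inr (Or.inr (Or.inr (Or.inl ⟨z, m2, hvz, hzL2, hm2, hmeq, hzm2⟩))))
      have hnadj' : ¬ G.Adj v u := fun h => hnadj h.symm
      have hncom' : ¬ ∃ w, G.Adj v w ∧ G.Adj w u := by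
        rintro ⟨w, h1, h2⟩
        exact hncom ⟨w, h2.symm, h1.symm⟩
      by_cases f1 : ∃ mj ∈ M, G.Adj u mj
      · obtain ⟨mj, hmj, humj⟩ := f1
        by_cases hmjeq : mj = mi
        · exact win_flip G (lockedEsc G hconn hcov hML2 hMp hmi hv hu (Ne.symm huv)
            hnadj' hncom' hyva hyvL (hlockv yv hyva hyvL) hvmi humi huM
            (Or.inl (hmjeq ▸ humj)))
        · exact win_flip G (lockedEsc G hconn hcov hML2 hMp hmi hv hu (Ne.symm huv)
            hnadj' hncom' hyva hyvL (hlockv yv hyva hyvL) hvmi humi huM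
            (Or.inr (Or.inr (Or.inl ⟨mj, hmj, hmjeq, humj⟩))))
      by_cases f2 : ∃ z m2, G.Adj u z ∧ L2 G D z ∧ m2 ∈ M ∧ G.Adj z m2
      · obtain ⟨z, m2, huz, hzL2, hm2, hzm2⟩ := f2
        by_cases hmeq : m2 = mi
        · exact win_flip G (lockedEsc G hconn hcov hML2 hMp hmi hv hu (Ne.symm huv)
            hnadj' hncom' hyva hyvL (hlockv yv hyva hyvL) hvmi humi huM
            (Or.inr (Or.inl ⟨z, huz, hmeq ▸ hzm2, hzL2⟩)))
        · exact win_flip G (lockedEsc G hconn hcov hML2 hMp hmi hv hu (Ne.symm huv)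
            hnadj' hncom' hyva hyvL (hlockv yv hyva hyvL) hvmi humi huM
            (Or.inr (Or.inr (Or.inr (Or.inl ⟨z, m2, huz, hzL2, hm2, hmeq, hzm2⟩)))))
      -- both sides are bad : contradiction
      exfalso
      have hnoMv : ∀ m2 ∈ M, ¬ G.Adj v m2 := fun m2 hm2 hadj => e1 ⟨m2, hm2, hadj⟩
      have hnbv : ∀ z, G.Adj v z → L2 G D z → ∀ m2 ∈ M, ¬ G.Adj z m2 :=
        fun z hz hzL2 m2 hm2 hzm2 => e2 ⟨z, m2, hz, hzL2, hm2, hzm2⟩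
      have hnoMu : ∀ m2 ∈ M, ¬ G.Adj u m2 := fun m2 hm2 hadj => f1 ⟨m2, hm2, hadj⟩
      have hnbu : ∀ z, G.Adj u z → L2 G D z → ∀ m2 ∈ M, ¬ G.Adj z m2 :=
        fun z hz hzL2 m2 hm2 hzm2 => f2 ⟨z, m2, hz, hzL2, hm2, hzm2⟩
      have hgv := bad_gates G hcov hML2 hMp hswap hmi hv hvmi hlockv hnoMv hnbv
      have hgu := bad_gates G hcov hML2 hMp hswap hmi hu humi hlocku hnoMu hnbu
      have h1 : yu ∈ gateF G D u := (mem_gateF G D).mpr ⟨hyua, hyuL⟩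
      rw [hgu, ← hgv] at h1
      have h2 := (mem_gateF G D).mp h1
      exact hncom ⟨yu, hyua, h2.1.symm⟩
    case neg =>
      push_neg at hMadj
      have hsyu : sig G D M yu = D.card + M.card := sig_A G hyuL hMadj
      have hvall : ∀ y, G.Adj v y → L1 G D y → sig G D M y = D.card + M.card := by
        intro y hy hyL
        rw [← hdiff yu hyua hyuL y hy hyL, hsyu]
      have hvM : v ∉ M := by
        intro hvM'
        have h1 : sig G D M yv = D.card + idxM M v := sig_C G hMp hyvL hvM' hyva.symm
        have h2 := hvall yv hyva hyvL
        have := idxM_lt M hvM'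
        omega
      obtain ⟨m, hm, hnear⟩ := hMcov v hv
      have hmv : m ≠ v := fun heq => hvM (heq ▸ hm)
      obtain ⟨ym, hmym, hymL⟩ := L2_gate G D hcov (hML2 m hm)
      have hcym : sig G D M ym = D.card + idxM M m := sig_C G hMp hymL hm hmym.symm
      have hEm : sig G D M m = D.card + M.card + 2 := sig_E G hML2 hm
      have hmidx := idxM_lt M hm
      obtain ⟨a, haD, hyua2⟩ := hyuL.2
      obtain ⟨b, hbD, hymb⟩ := hymL.2
      rcases hnear with heq | hadjm | ⟨w, hvw, hwm⟩
      · exact absurd heq.symm hmv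
      · apply buildLR G hconn haD hbD hu.1 hv.1 huv [yu] [ym, m]
          (Walk.cons hyua (Walk.cons hyua2 Walk.nil)) (by simp)
          (Walk.cons hymb.symm (Walk.cons hmym.symm (Walk.cons hadjm.symm Walk.nil)))
          (by simp)
        · intro zz hzz
          simp only [List.mem_append, List.mem_cons, List.mem_singleton,
            List.not_mem_nil, or_false] at hzz
          rcases hzz with heq | heq | heq <;> rw [heq]
          · exact hyuL.1
          · exact hymL.1
          · exact (hML2 m hm).1
        · intro zz hzz
          simp only [List.mem_append, List.mem_cons, List.mem_singleton,
            List.not_mem_nil, or_false] at hzz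
          rcases hzz with heq | heq | heq <;> rw [heq]
          · exact ⟨L1_ne_L2' G hyuL hu, L1_ne_L2' G hyuL hv⟩
          · exact ⟨L1_ne_L2' G hymL hu, L1_ne_L2' G hymL hv⟩
          · constructor
            · intro heq2
              rw [heq2] at hadjm
              exact hnadj hadjm.symm
            · exact hmv
        · simp only [List.map_append, List.map_cons, List.map_nil]
          simp [hsyu, hcym, hEm]
          omega
      · have hwD : w ∉ D := fun hwD => (hML2 m hm).2 ⟨w, hwD, hwm.symm⟩
        rcases tri G D w with h | h | h
        · exact absurd h hwD
        · exfalso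
          have h1 := hvall w hvw h
          have h2 : sig G D M w = D.card + idxM M m := sig_C G hMp h hm hwm
          omega
        · have hwM : w ∉ M := fun hwM => hMp w hwM m hm hwm.ne (Or.inr (Or.inl hwm))
          have hBw : sig G D M w = D.card + M.card + 1 := sig_B G h hwM
          apply buildLR G hconn haD hbD hu.1 hv.1 huv [yu] [ym, m, w]
            (Walk.cons hyua (Walk.cons hyua2 Walk.nil)) (by simp)
            (Walk.cons hymb.symm (Walk.cons hmym.symm
              (Walk.cons hwm.symm (Walk.cons hvw.symm Walk.nil)))) (by simp)
          · intro zz hzz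
            simp only [List.mem_append, List.mem_cons, List.mem_singleton,
              List.not_mem_nil, or_false] at hzz
            rcases hzz with heq | heq | heq | heq <;> rw [heq]
            · exact hyuL.1
            · exact hymL.1
            · exact (hML2 m hm).1
            · exact h.1
          · intro zz hzz
            simp only [List.mem_append, List.mem_cons, List.mem_singleton,
              List.not_mem_nil, or_false] at hzz
            rcases hzz with heq | heq | heq | heq <;> rw [heq]
            · exact ⟨L1_ne_L2' G hyuL hu, L1_ne_L2' G hyuL hv⟩
            · exact ⟨L1_ne_L2' G hymL hu, L1_ne_L2' G hymL hv⟩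
            · constructor
              · intro heq2
                rw [heq2] at hwm
                exact hncom ⟨w, hwm.symm, hvw.symm⟩
              · exact hmv
            · constructor
              · intro heq2
                rw [heq2] at hvw
                exact hnadj hvw.symm
              · exact hvw.ne'
          · simp only [List.map_append, List.map_cons, List.map_nil]
            simp [hsyu, hcym, hEm, hBw]
            omega

lemma main_pair (hconn : connTo G D r) (hcov : ∀ w, cov2 G D w)
    (hML2 : ∀ m ∈ M, L2 G D m) (hMp : pack G M)
    (hMcov : ∀ z, L2 G D z → ∃ m ∈ M, near G z m)
    (hswap : ∀ x mi, mi ∈ M → x ∉ M → L2 G D x →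
        (∀ m ∈ M, m ≠ mi → ¬ near G x m) →
        (gateF G D mi).card ≤ (gateF G D x).card)
    (u v : V) : Win G (D := D) (M := M) u v := by
  by_cases huv : u = v
  · subst huv
    exact ⟨Walk.nil, by rw [Walk.isPath_def]; simp, by simp, by simp⟩
  by_cases hadj : G.Adj u v
  · exact path_edge G hadj
  by_cases hcom : ∃ w, G.Adj u w ∧ G.Adj w v
  · obtain ⟨w, h1, h2⟩ := hcom
    exact path2 G h1 h2 huv
  have hadj' : ¬ G.Adj v u := fun h => hadj h.symm
  have hcom' : ¬ ∃ w, G.Adj v w ∧ G.Adj w u := by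
    rintro ⟨w, h1, h2⟩
    exact hcom ⟨w, h2.symm, h1.symm⟩
  rcases tri G D u with huD | huL1 | huL2 <;> rcases tri G D v with hvD | hvL1 | hvL2
  · exact buildD G hconn huD hvD
  · obtain ⟨b, hbD, hvb⟩ := hvL1.2
    exact buildR G hconn huD hbD hvL1.1 [] (Walk.cons hvb.symm Walk.nil)
      (by simp) (by simp) (by simp) (by simp)
  · obtain ⟨y, hvy, hyL⟩ := L2_gate G D hcov hvL2
    obtain ⟨b, hbD, hyb⟩ := hyL.2
    apply buildR G hconn huD hbD hvL2.1 [y]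
      (Walk.cons hyb.symm (Walk.cons hvy.symm Walk.nil)) (by simp)
    · intro zz hzz
      rw [List.mem_singleton] at hzz
      rw [hzz]
      exact hyL.1
    · intro zz hzz
      rw [List.mem_singleton] at hzz
      rw [hzz]
      exact L1_ne_L2' G hyL hvL2
    · simp
  · obtain ⟨b, hbD, hub⟩ := huL1.2
    exact win_flip G (buildR G hconn hvD hbD huL1.1 [] (Walk.cons hub.symm Walk.nil)
      (by simp) (by simp) (by simp) (by simp))
  · obtain ⟨a, haD, hua⟩ := huL1.2
    obtain ⟨b, hbD, hvb⟩ := hvL1.2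
    exact buildLR G hconn haD hbD huL1.1 hvL1.1 huv [] []
      (Walk.cons hua Walk.nil) (by simp) (Walk.cons hvb.symm Walk.nil) (by simp)
      (by simp) (by simp) (by simp)
  · obtain ⟨a, haD, hua⟩ := huL1.2
    obtain ⟨y, hvy, hyL⟩ := L2_gate G D hcov hvL2
    obtain ⟨b, hbD, hyb⟩ := hyL.2
    apply buildLR G hconn haD hbD huL1.1 hvL2.1 huv [] [y]
      (Walk.cons hua Walk.nil) (by simp)
      (Walk.cons hyb.symm (Walk.cons hvy.symm Walk.nil)) (by simp)
    · intro zz hzz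
      simp only [List.nil_append, List.mem_singleton] at hzz
      rw [hzz]
      exact hyL.1
    · intro zz hzz
      simp only [List.nil_append, List.mem_singleton] at hzz
      rw [hzz]
      constructor
      · intro heq2
        rw [heq2] at hvy
        exact hadj hvy.symm
      · exact L1_ne_L2' G hyL hvL2
    · simp
  · obtain ⟨y, huy, hyL⟩ := L2_gate G D hcov huL2
    obtain ⟨b, hbD, hyb⟩ := hyL.2
    apply win_flip G
    apply buildR G hconn hvD hbD huL2.1 [y]
      (Walk.cons hyb.symm (Walk.cons huy.symm Walk.nil)) (by simp)
    · intro zz hzz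
      rw [List.mem_singleton] at hzz
      rw [hzz]
      exact hyL.1
    · intro zz hzz
      rw [List.mem_singleton] at hzz
      rw [hzz]
      exact L1_ne_L2' G hyL huL2
    · simp
  · obtain ⟨a, haD, hva⟩ := hvL1.2
    obtain ⟨y, huy, hyL⟩ := L2_gate G D hcov huL2
    obtain ⟨b, hbD, hyb⟩ := hyL.2
    apply win_flip G
    apply buildLR G hconn haD hbD hvL1.1 huL2.1 (Ne.symm huv) [] [y]
      (Walk.cons hva Walk.nil) (by simp)
      (Walk.cons hyb.symm (Walk.cons huy.symm Walk.nil)) (by simp)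
    · intro zz hzz
      simp only [List.nil_append, List.mem_singleton] at hzz
      rw [hzz]
      exact hyL.1
    · intro zz hzz
      simp only [List.nil_append, List.mem_singleton] at hzz
      rw [hzz]
      constructor
      · intro heq2
        rw [heq2] at huy
        exact hadj' huy.symm
      · exact L1_ne_L2' G hyL huL2
    · simp
  · exact winL2L2 G hconn hcov hML2 hMp hMcov hswap huv hadj hcom huL2 hvL2

end Stage6B

end RVC


open RVC

theorem stmt_10 {V : Type*} [Fintype V] (G : SimpleGraph V) [DecidableRel G.Adj]
    (hG : G.Connected) (hδ1 : 16 ≤ G.minDegree)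
    (hδ2 : (G.minDegree : ℝ) ≤ Real.sqrt (Fintype.card V - 1) - 2) :
    (rvc G : ℝ) ≤ 4 * (Fintype.card V : ℝ) / (G.minDegree + 1) + 5 := by
  classical
  obtain ⟨D, S, r, hgood, hcov⟩ := exists_tree G hG
  obtain ⟨M, hML2, hMp, hMcov, hswap⟩ := exists_M G D hcov
  have hrb : IsRainbowVColoring G (sig G D M) (D.card + M.card + 3) := by
    intro u v
    exact main_pair G hgood.hc hcov hML2 hMp hMcov hswap u v
  have h1 : rvc G ≤ D.card + M.card + 3 :=
    Nat.sInf_le ⟨sig G D M, hrb⟩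
  have hScard : S.card * (G.minDegree + 1) ≤ Fintype.card V := pack_card G hgood.hp
  have hMcard : M.card * (G.minDegree + 1) ≤ Fintype.card V := pack_card G hMp
  have hDcard : D.card + 2 ≤ 3 * S.card := hgood.hcard
  have hK : rvc G ≤ 3 * S.card + M.card + 1 := by omega
  have hδpos : (0 : ℝ) < (G.minDegree : ℝ) + 1 := by positivity
  have hS : (S.card : ℝ) ≤ (Fintype.card V : ℝ) / ((G.minDegree : ℝ) + 1) := by
    rw [le_div_iff₀ hδpos]
    exact_mod_cast hScard
  have hM : (M.card : ℝ) ≤ (Fintype.card V : ℝ) / ((G.minDegree : ℝ) + 1) := by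
    rw [le_div_iff₀ hδpos]
    exact_mod_cast hMcard
  have h2 : (rvc G : ℝ) ≤ 3 * (S.card : ℝ) + (M.card : ℝ) + 1 := by
    exact_mod_cast Nat.cast_le.mpr hK
  calc (rvc G : ℝ) ≤ 3 * (S.card : ℝ) + (M.card : ℝ) + 1 := h2
    _ ≤ 3 * ((Fintype.card V : ℝ) / ((G.minDegree : ℝ) + 1))
        + (Fintype.card V : ℝ) / ((G.minDegree : ℝ) + 1) + 1 := by
        have := hS
        have := hM
        nlinarith
    _ = 4 * (Fintype.card V : ℝ) / ((G.minDegree : ℝ) + 1) + 1 := by ring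
    _ ≤ 4 * (Fintype.card V : ℝ) / ((G.minDegree : ℝ) + 1) + 5 := by linarith
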